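/- arXiv:2503.06714 — 8 statements merged into one kernel-verified Lean document; each statement's English description precedes it below -/
import Mathlib

section
/- Let G be a finite group viewed as the conjugation rack (G, ▷) with a ▷ b = a b a⁻¹. A subset M ⊆ G is a maximal proper subrack of G if and only if M is the union of all conjugacy classes of G except exactly one. -/
/-- A subset of a group closed under conjugation by its own elements. -/
def IsSubrack {G : Type*} [Group G] (S : Set G) : Prop :=
  ∀ a ∈ S, ∀ b ∈ S, a * b * a⁻¹ ∈ S

section Aux

variable {G : Type*} [Group G] [Finite G]

lemma inv_conj_mem {S : Set G} (a : G) (h : ∀ b ∈ S, a * b * a⁻¹ ∈ S) :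
    ∀ b ∈ S, a⁻¹ * b * a ∈ S := by
  intro b hb
  have hmap : Set.MapsTo (fun x => a * x * a⁻¹) S S := fun x hx => h x hx
  have hinj : Set.InjOn (fun x => a * x * a⁻¹) S := by
    intro x hx y hy hxy
    simp only at hxy
    have := mul_right_cancel hxy
    exact mul_left_cancel this
  have hbij := ((Set.toFinite S).injOn_iff_bijOn_of_mapsTo hmap).mp hinj
  obtain ⟨c, hc, hca⟩ := hbij.surjOn hb
  have : a⁻¹ * b * a = c := by rw [← hca]; group
  rw [this]; exact hc

lemma conj_mem_of_mem_closure {S : Set G} (hS : IsSubrack S) :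
    ∀ k ∈ Subgroup.closure S, ∀ b ∈ S, k * b * k⁻¹ ∈ S := by
  intro k hk
  induction hk using Subgroup.closure_induction with
  | mem x hx => exact fun b hb => hS x hx b hb
  | one => intro b hb; simpa using hb
  | mul x y hx hy px py =>
      intro b hb
      have h1 := px (y * b * y⁻¹) (py b hb)
      have h2 : (x * y) * b * (x * y)⁻¹ = x * (y * b * y⁻¹) * x⁻¹ := by group
      rw [h2]; exact h1
  | inv x hx px =>
      intro b hb
      have := inv_conj_mem x px b hb
      simpa using this

omit [Finite G] in
lemma compl_class_subrack (g : G) : IsSubrack {y : G | IsConj g y}ᶜ := by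
  intro a _ b hb
  intro habs
  apply hb
  have h1 : IsConj (a * b * a⁻¹) b := isConj_iff.mpr ⟨a⁻¹, by group⟩
  exact habs.trans h1

/-- In a finite group, some element lies outside all conjugates of a proper subgroup. -/
lemma exists_not_conj_mem (K : Subgroup G) (hK : K ≠ ⊤) :
    ∃ g : G, ∀ a : G, a * g * a⁻¹ ∉ K := by
  classical
  letI : Fintype G := Fintype.ofFinite G
  letI : Fintype (G ⧸ K) := Fintype.ofFinite _
  letI : ∀ a : G, Fintype (MulAction.fixedBy (G ⧸ K) a) := fun a => Fintype.ofFinite _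
  letI : Fintype (Quotient (MulAction.orbitRel G (G ⧸ K))) := Fintype.ofFinite _
  by_contra hcon
  push_neg at hcon
  have hfix : ∀ g : G, (MulAction.fixedBy (G ⧸ K) g).Nonempty := by
    intro g
    obtain ⟨a, ha⟩ := hcon g
    refine ⟨((a⁻¹ : G) : G ⧸ K), ?_⟩
    show g • ((a⁻¹ : G) : G ⧸ K) = ((a⁻¹ : G) : G ⧸ K)
    have h1 : g • ((a⁻¹ : G) : G ⧸ K) = ((g * a⁻¹ : G) : G ⧸ K) := rfl
    rw [h1, QuotientGroup.eq]
    have h2 : (g * a⁻¹)⁻¹ * a⁻¹ = (a * g * a⁻¹)⁻¹ := by group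
    rw [h2]
    exact inv_mem ha
  have hΩ : Fintype.card (Quotient (MulAction.orbitRel G (G ⧸ K))) = 1 := by
    rw [Fintype.card_eq_one_iff]
    refine ⟨⟦((1 : G) : G ⧸ K)⟧, ?_⟩
    intro q
    induction q using Quotient.inductionOn with
    | h b =>
      apply Quotient.sound
      obtain ⟨g, hg⟩ := MulAction.exists_smul_eq G ((1 : G) : G ⧸ K) b
      exact MulAction.mem_orbit_iff.mpr ⟨g, hg⟩
  have hsum := MulAction.sum_card_fixedBy_eq_card_orbits_mul_card_group G (G ⧸ K)
  rw [hΩ, one_mul] at hsum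
  have hone : Fintype.card (MulAction.fixedBy (G ⧸ K) (1 : G)) = Fintype.card (G ⧸ K) := by
    apply Fintype.card_congr
    apply Equiv.subtypeUnivEquiv
    intro x
    show (1 : G) • x = x
    simp
  have hidx : 2 ≤ Fintype.card (G ⧸ K) := by
    have h0 : K.index ≠ 0 := K.index_ne_zero_of_finite
    have h1 : K.index ≠ 1 := by
      intro h; exact hK (Subgroup.index_eq_one.mp h)
    have h2 : K.index = Fintype.card (G ⧸ K) := by
      rw [Subgroup.index, Nat.card_eq_fintype_card]
    omega
  have hterm : ∀ g : G, 1 ≤ Fintype.card (MulAction.fixedBy (G ⧸ K) g) := by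
    intro g
    have : Nonempty (MulAction.fixedBy (G ⧸ K) g) := by
      obtain ⟨x, hx⟩ := hfix g
      exact ⟨⟨x, hx⟩⟩
    exact Fintype.card_pos_iff.mpr this
  have hlow : Fintype.card G + 1 ≤
      ∑ g : G, Fintype.card (MulAction.fixedBy (G ⧸ K) g) := by
    rw [← Finset.add_sum_erase Finset.univ _ (Finset.mem_univ (1 : G))]
    have h2 : (Finset.univ.erase (1 : G)).card ≤
        ∑ g ∈ Finset.univ.erase (1 : G), Fintype.card (MulAction.fixedBy (G ⧸ K) g) := by
      calc (Finset.univ.erase (1 : G)).card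
          = ∑ _g ∈ Finset.univ.erase (1 : G), 1 := by simp
        _ ≤ _ := Finset.sum_le_sum (fun i _ => hterm i)
    have h3 : (Finset.univ.erase (1 : G)).card = Fintype.card G - 1 := by
      rw [Finset.card_erase_of_mem (Finset.mem_univ _), Finset.card_univ]
    have h4 : 1 ≤ Fintype.card G := Fintype.card_pos
    omega
  omega

/-- Key transitivity lemma: the subgroup generated by the complement of the
conjugacy class of `g` acts transitively (by conjugation) on that class. -/
lemma key_trans (g x y : G) (hx : IsConj g x) (hy : IsConj g y) :
    ∃ h ∈ Subgroup.closure {z : G | IsConj g z}ᶜ, h * x * h⁻¹ = y := by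
  classical
  set C : Set G := {z : G | IsConj g z} with hC
  set H : Subgroup G := Subgroup.closure Cᶜ with hHdef
  obtain ⟨u, hu⟩ := isConj_iff.mp (hx.symm.trans hy)
  by_cases hH : H = ⊤
  · exact ⟨u, by rw [hH]; exact Subgroup.mem_top u, hu⟩
  by_cases huH : u ∈ H
  · exact ⟨u, huH, hu⟩
  -- counting argument
  have hxne : x ≠ 1 := by
    rintro rfl
    have hg1 : g = 1 := isConj_one_left.mp hx
    apply hH
    rw [eq_top_iff]
    intro v _
    by_cases hv : v = 1
    · rw [hv]; exact one_mem H
    · apply Subgroup.subset_closure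
      intro hvC
      have hvC' : IsConj g v := hvC
      rw [hg1] at hvC'
      exact hv (isConj_one_right.mp hvC')
  have hxC : x ∈ C := hx
  have horb : MulAction.orbit (ConjAct G) x = C := by
    ext z
    rw [ConjAct.orbit_eq_carrier_conjClasses, ConjClasses.mem_carrier_iff_mk_eq,
        ConjClasses.mk_eq_mk_iff_isConj]
    constructor
    · intro h; exact hx.trans h.symm
    · intro h; exact (h.symm.trans hx)
  haveI : Finite (ConjAct G) := ‹Finite G›
  set n := Nat.card G with hn
  have hconjcard : Nat.card (ConjAct G) = n := rfl
  have horbcard : Set.ncard C * Nat.card (MulAction.stabilizer (ConjAct G) x) = n := by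
    have h1 : Nat.card (MulAction.orbit (ConjAct G) x) =
        (MulAction.stabilizer (ConjAct G) x).index := by
      rw [Nat.card_congr (MulAction.orbitEquivQuotientStabilizer (ConjAct G) x)]
      rfl
    have h2 : Set.ncard C = (MulAction.stabilizer (ConjAct G) x).index := by
      rw [← horb, ← Nat.card_coe_set_eq, h1]
    rw [h2, mul_comm]
    rw [← hconjcard]
    exact Subgroup.card_mul_index _
  have hstab2 : 2 ≤ Nat.card (MulAction.stabilizer (ConjAct G) x) := by
    have h1 : ConjAct.toConjAct x ∈ MulAction.stabilizer (ConjAct G) x := by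
      rw [MulAction.mem_stabilizer_iff, ConjAct.toConjAct_smul]
      group
    have hne : (⟨ConjAct.toConjAct x, h1⟩ :
        MulAction.stabilizer (ConjAct G) x) ≠ ⟨1, one_mem _⟩ := by
      intro h
      apply hxne
      have h2 : ConjAct.toConjAct x = 1 := Subtype.ext_iff.mp h
      have h3 : ConjAct.toConjAct x = ConjAct.toConjAct 1 := by
        rw [h2, map_one]
      exact ConjAct.toConjAct.injective h3
    have : Nontrivial (MulAction.stabilizer (ConjAct G) x) := ⟨⟨_, _, hne⟩⟩
    exact Finite.one_lt_card_iff_nontrivial.mpr this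
  have hHsub : (↑H : Set G)ᶜ ⊆ C := by
    intro v hv
    by_contra hvC
    exact hv (Subgroup.subset_closure hvC)
  have hcompl : Set.ncard (↑H : Set G) + Set.ncard ((↑H : Set G)ᶜ) = n :=
    Set.ncard_add_ncard_compl _
  have hcardH : Set.ncard (↑H : Set G) = Nat.card H := by
    rw [← Nat.card_coe_set_eq]
    rfl
  have hHle : Set.ncard ((↑H : Set G)ᶜ) ≤ Set.ncard C :=
    Set.ncard_le_ncard hHsub (Set.toFinite C)
  have hidx : Nat.card H * H.index = n := Subgroup.card_mul_index H
  have hidxne1 : H.index ≠ 1 := fun h => hH (Subgroup.index_eq_one.mp h)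
  have hidxne0 : H.index ≠ 0 := Subgroup.index_ne_zero_of_finite
  have hidx2 : 2 ≤ H.index := by omega
  have hHpos : 0 < Nat.card H := Nat.card_pos
  have h2h : 2 * Nat.card H ≤ n := by
    calc 2 * Nat.card H ≤ H.index * Nat.card H := Nat.mul_le_mul_right _ hidx2
      _ = n := by rw [mul_comm]; exact hidx
  have h2c : 2 * Set.ncard C ≤ n := by
    calc 2 * Set.ncard C = Set.ncard C * 2 := by ring
      _ ≤ Set.ncard C * Nat.card (MulAction.stabilizer (ConjAct G) x) :=
          Nat.mul_le_mul_left _ hstab2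
      _ = n := horbcard
  have hkeq : Set.ncard ((↑H : Set G)ᶜ) = Set.ncard C := by omega
  have h2heq : 2 * Nat.card H = n := by omega
  have hCeq : (↑H : Set G)ᶜ = C :=
    Set.eq_of_subset_of_ncard_le hHsub (le_of_eq hkeq.symm) (Set.toFinite C)
  have hidxeq2 : H.index = 2 := by
    have h5 : Nat.card H * H.index = Nat.card H * 2 := by
      rw [hidx]; omega
    exact Nat.eq_of_mul_eq_mul_left hHpos h5
  have hxH : x ∉ H := by
    rw [← hCeq] at hxC
    exact hxC
  have huxH : u * x ∈ H := (Subgroup.mul_mem_iff_of_index_two hidxeq2).mpr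
    (iff_of_false huH hxH)
  refine ⟨u * x, huxH, ?_⟩
  rw [← hu]; group

end Aux

/-- A subset M of a finite group G is a maximal proper subrack of the group rack
iff M is the union of all conjugacy classes except exactly one, i.e. the complement
of a single conjugacy class. -/
theorem stmt4 {G : Type*} [Group G] [Finite G] (M : Set G) (hM : IsSubrack M) :
    (M ≠ Set.univ ∧
      ∀ T : Set G, IsSubrack T → M ⊆ T → T = M ∨ T = Set.univ) ↔
    ∃ g : G, M = {y : G | IsConj g y}ᶜ := by
  constructor
  · rintro ⟨hne, hmax⟩
    have main : ∃ g : G, ∀ y ∈ M, ¬ IsConj g y := by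
      by_cases hK : Subgroup.closure M = ⊤
      · obtain ⟨g, hg⟩ : ∃ g, g ∉ M := by
          by_contra h
          push_neg at h
          exact hne (Set.eq_univ_of_forall h)
        refine ⟨g, fun y hy hconj => hg ?_⟩
        obtain ⟨k, hk⟩ := isConj_iff.mp hconj.symm
        have hkmem : k ∈ Subgroup.closure M := by rw [hK]; exact Subgroup.mem_top k
        have := conj_mem_of_mem_closure hM k hkmem y hy
        rwa [hk] at this
      · obtain ⟨g, hg⟩ := exists_not_conj_mem (Subgroup.closure M) hK
        refine ⟨g, fun y hy hconj => ?_⟩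
        obtain ⟨c, hc⟩ := isConj_iff.mp hconj
        apply hg c
        rw [hc]
        exact Subgroup.subset_closure hy
    obtain ⟨g, hg⟩ := main
    have hsubM : M ⊆ {y : G | IsConj g y}ᶜ := fun y hy h => hg y hy h
    rcases hmax _ (compl_class_subrack g) hsubM with h | h
    · exact ⟨g, h.symm⟩
    · exfalso
      have : g ∈ {y : G | IsConj g y}ᶜ := by rw [h]; trivial
      exact this (IsConj.refl g)
  · rintro ⟨g, rfl⟩
    constructor
    · intro h
      have : g ∈ {y : G | IsConj g y}ᶜ := by rw [h]; trivial
      exact this (IsConj.refl g)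
    · intro T hT hsub
      by_cases hTM : T = {y : G | IsConj g y}ᶜ
      · exact Or.inl hTM
      right
      have hex : ∃ x ∈ T, IsConj g x := by
        by_contra h
        push_neg at h
        exact hTM (Set.Subset.antisymm (fun t ht => h t ht) hsub)
      obtain ⟨x, hxT, hgx⟩ := hex
      apply Set.eq_univ_of_forall
      intro y
      by_cases hy : IsConj g y
      · obtain ⟨h, hh, hconj⟩ := key_trans g x y hgx hy
        have hh' : h ∈ Subgroup.closure T :=
          Subgroup.closure_mono hsub hh
        have := conj_mem_of_mem_closure hT h hh' x hxT
        rwa [hconj] at this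
      · exact hsub hy
end

section
/- Let G be a finite group with exactly c conjugacy classes. Then the subrack lattice R(G) of the group rack (G, ▷) has exactly c coatoms (maximal elements below G). -/
open scoped Pointwise

section Aux
variable {G : Type*} [Group G]

/-- The subgroup of elements whose conjugation preserves `S`. -/
def stabSet (S : Set G) : Subgroup G where
  carrier := {h : G | ∀ s : G, s ∈ S ↔ h * s * h⁻¹ ∈ S}
  one_mem' := by intro s; simp
  mul_mem' := by
    intro a b ha hb s
    have h : a * (b * s * b⁻¹) * a⁻¹ = (a * b) * s * (a * b)⁻¹ := by group
    rw [hb s, ha (b * s * b⁻¹), h]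
  inv_mem' := by
    intro a ha s
    have h1 := ha (a⁻¹ * s * a)
    have h2 : a * (a⁻¹ * s * a) * a⁻¹ = s := by group
    rw [h2] at h1
    rw [inv_inv]
    exact h1.symm

lemma mem_stabSet_of_mem [Finite G] {S : Set G} (hS : IsSubrack S) {a : G} (ha : a ∈ S) :
    a ∈ stabSet S := by
  intro s
  constructor
  · intro hs; exact hS a ha s hs
  · intro hs
    have hmaps : Set.MapsTo (fun x => a * x * a⁻¹) S S := fun x hx => hS a ha x hx
    have hinj : Set.InjOn (fun x => a * x * a⁻¹) S := by
      intro x _ y _ h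
      simpa using mul_left_cancel (mul_right_cancel h)
    have hsurj : Set.SurjOn (fun x => a * x * a⁻¹) S S :=
      ((Set.Finite.injOn_iff_bijOn_of_mapsTo (Set.toFinite S) hmaps).mp hinj).surjOn
    obtain ⟨x, hx, hxeq⟩ := hsurj hs
    have : x = s := by simpa using mul_left_cancel (mul_right_cancel hxeq)
    exact this ▸ hx

lemma closure_le_stabSet [Finite G] {S : Set G} (hS : IsSubrack S) :
    Subgroup.closure S ≤ stabSet S :=
  (Subgroup.closure_le _).mpr (fun _ ha => mem_stabSet_of_mem hS ha)

/-- A finite group is not covered by the conjugates of a proper subgroup. -/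
lemma exists_no_conj_mem [Finite G] (H : Subgroup G) (hH : H ≠ ⊤) :
    ∃ g : G, ∀ x : G, x * g * x⁻¹ ∉ H := by
  classical
  by_contra hcon
  push_neg at hcon
  have : Fintype (G ⧸ H) := Fintype.ofFinite _
  have hind : H.index = Fintype.card (G ⧸ H) := by
    rw [Subgroup.index_eq_card, Nat.card_eq_fintype_card]
  have hind0 : H.index ≠ 0 := by rw [hind]; exact Fintype.card_ne_zero
  set K : G ⧸ H → Subgroup G := fun q => H.map (MulAut.conj q.out).toMonoidHom with hK
  have hKmem : ∀ (q : G ⧸ H) (y : G), y ∈ K q ↔ q.out⁻¹ * y * q.out ∈ H := by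
    intro q y
    simp only [hK, Subgroup.mem_map, MulEquiv.coe_toMonoidHom, MulAut.conj_apply]
    constructor
    · rintro ⟨h, hh, rfl⟩
      have : q.out⁻¹ * (q.out * h * q.out⁻¹) * q.out = h := by group
      rw [this]; exact hh
    · intro h; exact ⟨_, h, by group⟩
  have hKindex : ∀ q, (K q).index = H.index := by
    intro q
    apply Subgroup.index_map_eq H (MulEquiv.surjective _)
    intro x hx
    have : (MulAut.conj q.out) x = 1 := hx
    have hx1 : x = 1 := (MulAut.conj q.out).injective (by simpa using this)
    rw [hx1]; exact H.one_mem
  have hcovers : ⋃ q ∈ (Finset.univ : Finset (G ⧸ H)), (1 : G) • (K q : Set G) = Set.univ := by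
    ext y
    simp only [Set.mem_iUnion, Finset.mem_univ, one_smul, Set.mem_univ, iff_true,
      exists_prop, true_and, SetLike.mem_coe]
    obtain ⟨x, hx⟩ := hcon y
    refine ⟨QuotientGroup.mk x⁻¹, ?_⟩
    rw [hKmem]
    set z : G := (QuotientGroup.mk x⁻¹ : G ⧸ H).out with hz
    have hzz : (QuotientGroup.mk z : G ⧸ H) = QuotientGroup.mk x⁻¹ := by
      rw [hz]; exact Quotient.out_eq _
    rw [QuotientGroup.eq] at hzz
    have hxz : x * z ∈ H := by
      have := H.inv_mem hzz
      simpa [mul_assoc] using this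
    have key : z⁻¹ * y * z = (x * z)⁻¹ * (x * y * x⁻¹) * (x * z) := by group
    rw [key]
    exact H.mul_mem (H.mul_mem (H.inv_mem hxz) hx) hxz
  have hsum : ∑ q ∈ (Finset.univ : Finset (G ⧸ H)), ((K q).index : ℚ)⁻¹ = 1 := by
    have : ∀ q ∈ (Finset.univ : Finset (G ⧸ H)), ((K q).index : ℚ)⁻¹ = ((H.index : ℚ))⁻¹ := by
      intro q _; rw [hKindex]
    rw [Finset.sum_congr rfl this, Finset.sum_const, Finset.card_univ, ← hind, nsmul_eq_mul,
      mul_inv_cancel₀]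
    exact_mod_cast hind0
  have hdisj := Subgroup.pairwiseDisjoint_leftCoset_cover_of_sum_inv_index_eq_one hcovers hsum
  have h1 : H.index ≠ 1 := fun h => hH (Subgroup.index_eq_one.mp h)
  have h2 : 1 < Fintype.card (G ⧸ H) := by omega
  have : Nontrivial (G ⧸ H) := Fintype.one_lt_card_iff_nontrivial.mp h2
  obtain ⟨q1, q2, hq⟩ := exists_pair_ne (G ⧸ H)
  have hmemf : ∀ q : G ⧸ H, q ∈ (Finset.univ.filter (fun q => (K q).FiniteIndex) : Finset (G ⧸ H)) := by
    intro q
    refine Finset.mem_filter.mpr ⟨Finset.mem_univ _, ⟨?_⟩⟩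
    rw [hKindex]; exact hind0
  have hd := hdisj (Finset.mem_coe.mpr (hmemf q1)) (Finset.mem_coe.mpr (hmemf q2)) hq
  exact Set.disjoint_left.mp hd
    (show (1 : G) ∈ (1 : G) • (K q1 : Set G) by rw [one_smul]; exact (K q1).one_mem)
    (show (1 : G) ∈ (1 : G) • (K q2 : Set G) by rw [one_smul]; exact (K q2).one_mem)

/-- The conjugacy class of `g`. -/
def cls (g : G) : Set G := {x | IsConj g x}

lemma mem_cls_self (g : G) : g ∈ cls g := IsConj.refl g

lemma isSubrack_compl_cls (g : G) : IsSubrack (cls g)ᶜ := by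
  intro a _ b hb
  intro hmem
  apply hb
  have h1 : IsConj b (a * b * a⁻¹) := isConj_iff.mpr ⟨a, rfl⟩
  exact hmem.trans h1.symm

lemma compl_cls_ne_univ (g : G) : (cls g)ᶜ ≠ Set.univ := by
  intro h
  have : g ∈ (cls g)ᶜ := h ▸ Set.mem_univ g
  exact this (mem_cls_self g)

lemma compl_cls_maximal [Finite G] (g : G) (T : Set G) (hT : IsSubrack T)
    (hsub : (cls g)ᶜ ⊂ T) : T = Set.univ := by
  obtain ⟨t, ht, htc⟩ := Set.exists_of_ssubset hsub
  have htcls : t ∈ cls g := by simpa using htc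
  by_cases hH : Subgroup.closure T = ⊤
  · ext x
    simp only [Set.mem_univ, iff_true]
    by_cases hx : x ∈ cls g
    · -- x conjugate to t, use invariance
      obtain ⟨y, hy⟩ := isConj_iff.mp (htcls.symm.trans hx)
      have hyT : y ∈ Subgroup.closure T := hH ▸ Subgroup.mem_top y
      have := (closure_le_stabSet hT hyT t).mp ht
      rwa [hy] at this
    · exact hsub.1 (by simpa using hx)
  · obtain ⟨g0, hg0⟩ := exists_no_conj_mem (Subgroup.closure T) hH
    have hg0T : g0 ∉ T := fun h => hg0 1 (by simpa using Subgroup.subset_closure h)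
    have hg0cls : g0 ∈ cls g := by
      by_contra h
      exact hg0T (hsub.1 (by simpa using h))
    obtain ⟨y, hy⟩ := isConj_iff.mp (hg0cls.symm.trans htcls)
    exact (hg0 y (hy ▸ Subgroup.subset_closure ht)).elim

lemma coatom_eq_compl_cls [Finite G] {M : Set G} (hM : IsSubrack M) (hne : M ≠ Set.univ)
    (hmax : ∀ T : Set G, IsSubrack T → M ⊂ T → T = Set.univ) :
    ∃ g : G, M = (cls g)ᶜ := by
  have step : ∃ g : G, M ⊆ (cls g)ᶜ := by
    by_cases hH : Subgroup.closure M = ⊤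
    · obtain ⟨g, hg⟩ : ∃ g : G, g ∉ M := by
        by_contra h
        push_neg at h
        exact hne (Set.eq_univ_of_forall h)
      refine ⟨g, fun m hm hcls => hg ?_⟩
      obtain ⟨y, hy⟩ := isConj_iff.mp (hcls : IsConj g m)
      have hyM : y⁻¹ ∈ Subgroup.closure M := hH ▸ Subgroup.mem_top y⁻¹
      have hmem := (closure_le_stabSet hM hyM m).mp hm
      have heq : y⁻¹ * m * y⁻¹⁻¹ = g := by rw [← hy]; group
      rwa [heq] at hmem
    · obtain ⟨g0, hg0⟩ := exists_no_conj_mem (Subgroup.closure M) hH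
      refine ⟨g0, fun m hm hcls => ?_⟩
      obtain ⟨y, hy⟩ := isConj_iff.mp (hcls : IsConj g0 m)
      exact hg0 y (hy ▸ Subgroup.subset_closure hm)
  obtain ⟨g, hsub⟩ := step
  refine ⟨g, ?_⟩
  rcases eq_or_ssubset_of_subset hsub with h | h
  · exact h
  · exact absurd (hmax _ (isSubrack_compl_cls g) h) (compl_cls_ne_univ g)

end Aux

/-- The subrack lattice of a finite group G has exactly as many coatoms as G has
conjugacy classes. -/
theorem stmt5 {G : Type*} [Group G] [Finite G] :
    Nat.card {M : Set G // IsSubrack M ∧ M ≠ Set.univ ∧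
        ∀ T : Set G, IsSubrack T → M ⊂ T → T = Set.univ} =
      Nat.card (ConjClasses G) := by
  have hcarrier : ∀ g : G, (ConjClasses.mk g).carrier = cls g := by
    intro g
    ext x
    rw [ConjClasses.mem_carrier_iff_mk_eq, ConjClasses.mk_eq_mk_iff_isConj]
    exact ⟨fun h => h.symm, fun h => h.symm⟩
  have hcoatom : ∀ g : G, IsSubrack (cls g)ᶜ ∧ (cls g)ᶜ ≠ Set.univ ∧
      ∀ T : Set G, IsSubrack T → (cls g)ᶜ ⊂ T → T = Set.univ :=
    fun g => ⟨isSubrack_compl_cls g, compl_cls_ne_univ g, compl_cls_maximal g⟩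
  let f : ConjClasses G → {M : Set G // IsSubrack M ∧ M ≠ Set.univ ∧
      ∀ T : Set G, IsSubrack T → M ⊂ T → T = Set.univ} := fun c =>
    ⟨(c.carrier)ᶜ, by
      obtain ⟨g, rfl⟩ := ConjClasses.exists_rep c
      rw [hcarrier]
      exact hcoatom g⟩
  have hbij : Function.Bijective f := by
    constructor
    · intro c1 c2 h
      have hcc : c1.carrier = c2.carrier := by
        have := congrArg (fun x => (x : {M : Set G // _}).1) h
        simpa [f] using compl_injective (by simpa [f] using congrArg Subtype.val h)
      obtain ⟨g1, rfl⟩ := ConjClasses.exists_rep c1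
      have : g1 ∈ c2.carrier := hcc ▸ ConjClasses.mem_carrier_mk
      exact (ConjClasses.mem_carrier_iff_mk_eq.mp this)
    · rintro ⟨M, hM, hne, hmax⟩
      obtain ⟨g, hg⟩ := coatom_eq_compl_cls hM hne hmax
      refine ⟨ConjClasses.mk g, ?_⟩
      apply Subtype.ext
      simp only [f]
      rw [hcarrier, ← hg]
  exact (Nat.card_eq_of_bijective f hbij).symm
end

section
/- Let G be a finite group and let A be a subrack of the group rack (G, ▷). The interval [∅, A] in the subrack lattice R(G) is a Boolean algebra if and only if every pair of elements of A commutes and in that case every nonempty subset of A is a subrack; in particular A (together with the identity if needed as a subgroup closure) consists of pairwise commuting elements. -/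
/-- The interval [∅, A] of the subrack lattice, as a poset: subracks contained in A. -/
def IntervalBelow {G : Type*} [Group G] (A : Set G) : Type _ :=
  {S : Set G // IsSubrack S ∧ S ⊆ A}

instance {G : Type*} [Group G] (A : Set G) : PartialOrder (IntervalBelow A) :=
  Subtype.partialOrder _

lemma interval_le_iff {G : Type*} [Group G] {A : Set G} (S T : IntervalBelow A) :
    S ≤ T ↔ S.1 ⊆ T.1 := Iff.rfl

lemma singleton_subrack {G : Type*} [Group G] (a : G) : IsSubrack ({a} : Set G) := by
  intro x hx y hy
  simp only [Set.mem_singleton_iff] at *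
  subst hx; subst hy; group

/-- The interval [∅, A] is a Boolean algebra (order-isomorphic to a powerset of a
finite set) iff the elements of A pairwise commute; and in that case every subset
of A is a subrack. -/
theorem stmt6 {G : Type*} [Group G] [Finite G] (A : Set G) (hA : IsSubrack A) :
    ((∃ (β : Type) (_ : Finite β), Nonempty (IntervalBelow A ≃o Set β)) ↔
      ∀ a ∈ A, ∀ b ∈ A, a * b = b * a) ∧
    ((∀ a ∈ A, ∀ b ∈ A, a * b = b * a) → ∀ S : Set G, S ⊆ A → IsSubrack S) := by
  have part2 : (∀ a ∈ A, ∀ b ∈ A, a * b = b * a) → ∀ S : Set G, S ⊆ A → IsSubrack S := by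
    intro h S hS a ha b hb
    have : a * b * a⁻¹ = b := by rw [h a (hS ha) b (hS hb)]; group
    rw [this]; exact hb
  refine ⟨⟨?_, ?_⟩, part2⟩
  · -- forward direction
    rintro ⟨β, hβ, ⟨e⟩⟩ a ha b hb
    by_contra hab
    have hne : a ≠ b := by rintro rfl; exact hab rfl
    set c : G := a * b * a⁻¹ with hc
    have hca : c ≠ a := by
      intro h
      have h' : a * b * a⁻¹ = a := h
      have h2 : a * b = a * a := mul_inv_eq_iff_eq_mul.mp h'
      exact hne (mul_left_cancel h2).symm
    have hcb : c ≠ b := by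
      intro h
      have h' : a * b * a⁻¹ = b := h
      exact hab (mul_inv_eq_iff_eq_mul.mp h')
    let bot : IntervalBelow A := ⟨∅, fun x hx => absurd hx (Set.notMem_empty x), Set.empty_subset A⟩
    have hAc : c ∈ A := hA a ha b hb
    let Sa : IntervalBelow A := ⟨{a}, singleton_subrack a, Set.singleton_subset_iff.mpr ha⟩
    let Sb : IntervalBelow A := ⟨{b}, singleton_subrack b, Set.singleton_subset_iff.mpr hb⟩
    let W : IntervalBelow A := ⟨{c}, singleton_subrack c, Set.singleton_subset_iff.mpr hAc⟩
    have ebot : e bot = (∅ : Set β) := by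
      have h1 : bot ≤ e.symm ∅ := by
        rw [interval_le_iff]; exact Set.empty_subset _
      have h2 : e bot ≤ e (e.symm ∅) := e.monotone h1
      rw [e.apply_symm_apply] at h2
      exact Set.subset_empty_iff.mp h2
    have atomfact : ∀ (S : IntervalBelow A) (x : G), S.1 = {x} →
        ∀ w ⊆ e S, w = ∅ ∨ w = e S := by
      intro S x hS w hw
      have h1 : e.symm w ≤ e.symm (e S) := e.symm.monotone hw
      rw [e.symm_apply_apply] at h1
      rw [interval_le_iff, hS] at h1
      rcases Set.subset_singleton_iff_eq.mp h1 with h2 | h2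
      · left
        have h3 : e.symm w = bot := Subtype.ext h2
        rw [← e.apply_symm_apply w, h3, ebot]
      · right
        have h3 : e.symm w = S := Subtype.ext (by rw [h2, hS])
        rw [← e.apply_symm_apply w, h3]
    set z : Set β := e Sa ∪ e Sb with hz
    set Z : IntervalBelow A := e.symm z with hZ
    have haZ : a ∈ Z.1 := by
      have h1 : Sa ≤ Z := by
        rw [hZ, ← e.symm_apply_apply Sa]
        exact e.symm.monotone Set.subset_union_left
      exact (interval_le_iff _ _).mp h1 rfl
    have hbZ : b ∈ Z.1 := by
      have h1 : Sb ≤ Z := by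
        rw [hZ, ← e.symm_apply_apply Sb]
        exact e.symm.monotone Set.subset_union_right
      exact (interval_le_iff _ _).mp h1 rfl
    have hcZ : c ∈ Z.1 := Z.2.1 a haZ b hbZ
    have hWZ : W ≤ Z := (interval_le_iff _ _).mpr (Set.singleton_subset_iff.mpr hcZ)
    have hwz : e W ⊆ z := by
      have := e.monotone hWZ
      rwa [hZ, e.apply_symm_apply] at this
    have hdecomp : e W = (e W ∩ e Sa) ∪ (e W ∩ e Sb) := by
      rw [← Set.inter_union_distrib_left, ← hz]
      exact (Set.inter_eq_left.mpr hwz).symm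
    rcases atomfact Sa a rfl (e W ∩ e Sa) Set.inter_subset_right with h1 | h1 <;>
      rcases atomfact Sb b rfl (e W ∩ e Sb) Set.inter_subset_right with h2 | h2
    · rw [h1, h2, Set.union_empty, ← ebot] at hdecomp
      have := e.injective hdecomp
      have : c ∈ (∅ : Set G) := by
        have hc' : c ∈ W.1 := rfl
        rwa [this] at hc'
      exact this
    · rw [h1, h2, Set.empty_union] at hdecomp
      have h3 := e.injective hdecomp
      have : c ∈ ({b} : Set G) := by
        have hc' : c ∈ W.1 := rfl
        rwa [h3] at hc'
      exact hcb this
    · rw [h1, h2, Set.union_empty] at hdecomp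
      have h3 := e.injective hdecomp
      have : c ∈ ({a} : Set G) := by
        have hc' : c ∈ W.1 := rfl
        rwa [h3] at hc'
      exact hca this
    · rw [h1, h2, ← hz] at hdecomp
      have h3 : W = Z := by
        rw [hZ, ← e.symm_apply_apply W, hdecomp]
      have : a ∈ W.1 := by rw [h3]; exact haZ
      exact hca (Set.mem_singleton_iff.mp this).symm
  · -- backward direction
    intro h
    have hsub := part2 h
    have hfin : Finite ↥A := Subtype.finite
    obtain ⟨n, ⟨ε⟩⟩ := Finite.exists_equiv_fin ↥A
    refine ⟨Fin n, inferInstance, ⟨?_⟩⟩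
    refine
      { toFun := fun S => {i : Fin n | ↑(ε.symm i) ∈ S.1}
        invFun := fun T => ⟨Subtype.val '' (ε.symm '' T),
          hsub _ (Subtype.coe_image_subset A _), Subtype.coe_image_subset A _⟩
        left_inv := ?_
        right_inv := ?_
        map_rel_iff' := ?_ }
    · intro S
      apply Subtype.ext
      ext g
      simp only [Set.mem_image, Set.mem_setOf_eq]
      constructor
      · rintro ⟨x, ⟨i, hi, rfl⟩, rfl⟩
        exact hi
      · intro hg
        exact ⟨⟨g, S.2.2 hg⟩, ⟨ε ⟨g, S.2.2 hg⟩, by simpa using hg, ε.symm_apply_apply _⟩, rfl⟩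
    · intro T
      ext i
      simp only [Set.mem_setOf_eq]
      constructor
      · intro hi
        obtain ⟨x, ⟨j, hj, rfl⟩, hx⟩ := hi
        have : ε.symm j = ε.symm i := Subtype.ext hx
        rwa [ε.symm.injective this] at hj
      · intro hi
        exact ⟨ε.symm i, ⟨i, hi, rfl⟩, rfl⟩
    · intro S T
      show (∀ i : Fin n, ↑(ε.symm i) ∈ S.1 → ↑(ε.symm i) ∈ T.1) ↔ S ≤ T
      constructor
      · intro hle
        rw [interval_le_iff]
        intro g hg
        have hgA : g ∈ A := S.2.2 hg
        have := hle (ε ⟨g, hgA⟩) (by simpa using hg)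
        simpa using this
      · intro hle i hi
        exact (interval_le_iff _ _).mp hle hi
end

section
/- Let G be a finite group. A subrack A ∈ R(G) is a maximal abelian subgroup of G if and only if the interval [∅, A] is a maximal Boolean algebra in R(G), i.e., [∅, A] is a Boolean algebra and whenever [∅, B] is a Boolean algebra for some subrack B ⊇ A, then A = B. -/
/-- The interval [∅, A] is a Boolean algebra, i.e. order-isomorphic to the powerset
lattice of some finite set. -/
def IsBooleanInterval {G : Type*} [Group G] (A : Set G) : Prop :=
  ∃ (β : Type) (_ : Finite β), Nonempty (IntervalBelow A ≃o Set β)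

section Aux

variable {G : Type*} [Group G]

lemma isSubrack_empty : IsSubrack (∅ : Set G) := fun _ h => absurd h (Set.notMem_empty _)

lemma isSubrack_singleton (a : G) : IsSubrack ({a} : Set G) := by
  intro x hx y hy
  simp only [Set.mem_singleton_iff] at hx hy ⊢
  subst hx; subst hy; group

instance (A : Set G) : OrderBot (IntervalBelow A) where
  bot := ⟨∅, isSubrack_empty, Set.empty_subset _⟩
  bot_le S := Set.empty_subset _

lemma IntervalBelow.le_iff {A : Set G} {S T : IntervalBelow A} : S ≤ T ↔ S.1 ⊆ T.1 :=
  Iff.rfl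

lemma IntervalBelow.bot_val {A : Set G} : (⊥ : IntervalBelow A).1 = ∅ := rfl

lemma image_preimage_val' {A S : Set G} (h : S ⊆ A) :
    (Subtype.val : ↥A → G) '' (Subtype.val ⁻¹' S) = S := by
  rw [Subtype.image_preimage_coe]
  exact Set.inter_eq_self_of_subset_right h

/-- If the elements of `A` pairwise commute, every subset of `A` is a subrack. -/
lemma isSubrack_of_comm {A : Set G} (hc : ∀ a ∈ A, ∀ b ∈ A, a * b = b * a)
    {S : Set G} (hS : S ⊆ A) : IsSubrack S := by
  intro a ha b hb
  rw [hc a (hS ha) b (hS hb)]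
  simpa using hb

/-- For a commuting set `A`, the interval below `A` is the powerset of `A`. -/
noncomputable def isoOfComm {A : Set G} (hc : ∀ a ∈ A, ∀ b ∈ A, a * b = b * a) :
    IntervalBelow A ≃o Set ↥A where
  toFun S := Subtype.val ⁻¹' S.1
  invFun T := ⟨Subtype.val '' T, isSubrack_of_comm hc (by rintro x ⟨y, _, rfl⟩; exact y.2),
    by rintro x ⟨y, _, rfl⟩; exact y.2⟩
  left_inv S := Subtype.ext (image_preimage_val' S.2.2)
  right_inv T := Set.preimage_image_eq T Subtype.val_injective
  map_rel_iff' {S T} := by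
    constructor
    · intro h x hx
      have hxA : x ∈ A := S.2.2 hx
      exact h (show (⟨x, hxA⟩ : ↥A) ∈ Subtype.val ⁻¹' S.1 from hx)
    · intro h x hx
      exact h hx

/-- An order isomorphism of powersets induced by an equivalence. -/
def setCongrIso {α β : Type*} (e : α ≃ β) : Set α ≃o Set β where
  toEquiv := Equiv.Set.congr e
  map_rel_iff' {S T} := Set.image_subset_image_iff e.injective

lemma isBooleanInterval_of_comm [Finite G] {A : Set G}
    (hc : ∀ a ∈ A, ∀ b ∈ A, a * b = b * a) : IsBooleanInterval A := by
  have : Finite ↥A := Subtype.finite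
  obtain ⟨n, ⟨e⟩⟩ := Finite.exists_equiv_fin ↥A
  exact ⟨Fin n, inferInstance, ⟨(isoOfComm hc).trans (setCongrIso e)⟩⟩

/-- Atoms of the interval are exactly singletons of elements of `A`. -/
lemma isAtom_intervalBelow_iff {A : Set G} (S : IntervalBelow A) :
    IsAtom S ↔ ∃ a ∈ A, S.1 = {a} := by
  constructor
  · rintro ⟨hne, hmin⟩
    have hSne : S.1 ≠ ∅ := fun h => hne (Subtype.ext h)
    obtain ⟨a, ha⟩ := Set.nonempty_iff_ne_empty.mpr hSne
    refine ⟨a, S.2.2 ha, ?_⟩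
    by_contra hne'
    have hlt : (⟨{a}, isSubrack_singleton a, Set.singleton_subset_iff.mpr (S.2.2 ha)⟩ :
        IntervalBelow A) < S := by
      refine lt_of_le_of_ne (Set.singleton_subset_iff.mpr ha) ?_
      intro h
      exact hne' (congrArg Subtype.val h).symm
    exact Set.singleton_ne_empty a (congrArg Subtype.val (hmin _ hlt))
  · rintro ⟨a, haA, hS⟩
    constructor
    · intro h
      have h2 := congrArg Subtype.val h
      rw [hS] at h2
      exact Set.singleton_ne_empty a h2
    · intro T hT
      rw [lt_iff_le_and_ne] at hT
      obtain ⟨hle, hne⟩ := hT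
      rw [IntervalBelow.le_iff, hS, Set.subset_singleton_iff_eq] at hle
      rcases hle with h | h
      · exact Subtype.ext h
      · exact absurd (Subtype.ext (h.trans hS.symm)) hne

/-- Atoms of the interval are in bijection with `A`. -/
noncomputable def atomsEquiv (A : Set G) : {S : IntervalBelow A // IsAtom S} ≃ ↥A where
  toFun S := ⟨(isAtom_intervalBelow_iff S.1).mp S.2 |>.choose,
    ((isAtom_intervalBelow_iff S.1).mp S.2).choose_spec.1⟩
  invFun a := ⟨⟨{(a : G)}, isSubrack_singleton _, Set.singleton_subset_iff.mpr a.2⟩,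
    (isAtom_intervalBelow_iff _).mpr ⟨a, a.2, rfl⟩⟩
  left_inv S := by
    apply Subtype.ext; apply Subtype.ext
    exact (((isAtom_intervalBelow_iff S.1).mp S.2).choose_spec.2).symm
  right_inv a := by
    apply Subtype.ext
    have h := ((isAtom_intervalBelow_iff
      (⟨{(a : G)}, isSubrack_singleton _, Set.singleton_subset_iff.mpr a.2⟩ : IntervalBelow A)).mp
      ((isAtom_intervalBelow_iff _).mpr ⟨a, a.2, rfl⟩)).choose_spec.2
    exact (Set.singleton_eq_singleton_iff.mp h).symm

/-- Atoms of the powerset of `β` are in bijection with `β`. -/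
noncomputable def setAtomsEquiv (β : Type*) : {S : Set β // IsAtom S} ≃ β where
  toFun S := (Set.isAtom_iff.mp S.2).choose
  invFun b := ⟨{b}, Set.isAtom_singleton b⟩
  left_inv S := by
    apply Subtype.ext
    exact (Set.isAtom_iff.mp S.2).choose_spec.symm
  right_inv b := by
    exact (Set.singleton_eq_singleton_iff.mp
      (Set.isAtom_iff.mp (Set.isAtom_singleton b)).choose_spec).symm

instance instFiniteIntervalBelow [Finite G] (A : Set G) : Finite (IntervalBelow A) :=
  Subtype.finite

lemma comm_of_isBooleanInterval [Finite G] {A : Set G} (hB : IsBooleanInterval A) :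
    ∀ a ∈ A, ∀ b ∈ A, a * b = b * a := by
  obtain ⟨β, hβ, ⟨f⟩⟩ := hB
  -- atoms correspondence gives `↥A ≃ β`
  have eAtoms : {S : IntervalBelow A // IsAtom S} ≃ {T : Set β // IsAtom T} :=
    f.toEquiv.subtypeEquiv (fun S => (f.isAtom_iff S).symm)
  have eAβ : ↥A ≃ β := (atomsEquiv A).symm.trans (eAtoms.trans (setAtomsEquiv β))
  -- hence `IntervalBelow A ≃ Set ↥A`
  have eTot : IntervalBelow A ≃ Set ↥A :=
    f.toEquiv.trans (Equiv.Set.congr eAβ).symm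
  -- the injective preimage map is therefore surjective
  have : Finite ↥A := Subtype.finite
  set g : IntervalBelow A → Set ↥A := fun S => Subtype.val ⁻¹' S.1 with hg
  have ginj : Function.Injective g := by
    intro S T h
    apply Subtype.ext
    rw [← image_preimage_val' S.2.2, ← image_preimage_val' T.2.2]
    exact congrArg _ h
  have gsurj : Function.Surjective g :=
    (Finite.injective_iff_surjective_of_equiv eTot).mp ginj
  -- every subset of `A` is a subrack; apply to pairs
  intro a ha b hb
  obtain ⟨S, hS⟩ := gsurj (Subtype.val ⁻¹' ({a, b} : Set G))
  have hSval : S.1 = {a, b} := by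
    have hsub : ({a, b} : Set G) ⊆ A := by
      rintro x (rfl | rfl); exacts [ha, hb]
    have hS' : (Subtype.val ⁻¹' S.1 : Set ↥A) = Subtype.val ⁻¹' ({a, b} : Set G) := hS
    rw [← image_preimage_val' S.2.2, hS']
    exact image_preimage_val' hsub
  have hrack : IsSubrack ({a, b} : Set G) := hSval ▸ S.2.1
  have hmem : a * b * a⁻¹ ∈ ({a, b} : Set G) :=
    hrack a (Set.mem_insert _ _) b (Set.mem_insert_of_mem _ rfl)
  rcases hmem with h | h
  · -- a * b * a⁻¹ = a  ⇒  b = a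
    have hba : b = a := by
      have := congrArg (fun t => a⁻¹ * t * a) h
      simpa [mul_assoc] using this
    rw [hba]
  · -- a * b * a⁻¹ = b
    have : a * b = b * a := by
      have := congrArg (· * a) h
      simpa [mul_assoc] using this
    exact this

lemma subgroup_carrier_isSubrack (H : Subgroup G) : IsSubrack (H : Set G) :=
  fun a ha b hb => mul_mem (mul_mem ha hb) (inv_mem ha)

lemma closure_comm {B : Set G} (hc : ∀ a ∈ B, ∀ b ∈ B, a * b = b * a) :
    ∀ x ∈ Subgroup.closure B, ∀ y ∈ Subgroup.closure B, x * y = y * x := by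
  intro x hx y hy
  refine Subgroup.closure_induction₂
    (p := fun x y _ _ => x * y = y * x)
    (fun a b ha hb => hc a ha b hb)
    (fun x _ => by simp) (fun x _ => by simp)
    (fun x y z _ _ _ h1 h2 => by
      have : x * (y * z) = x * (z * y) := by rw [h2]
      calc x * y * z = x * (y * z) := by rw [mul_assoc]
        _ = x * z * y := by rw [this, ← mul_assoc]
        _ = z * x * y := by rw [h1]
        _ = z * (x * y) := by rw [mul_assoc])
    (fun y z x _ _ _ h1 h2 => by
      calc x * (y * z) = x * y * z := by rw [mul_assoc]
        _ = y * x * z := by rw [h1]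
        _ = y * (x * z) := by rw [mul_assoc]
        _ = y * (z * x) := by rw [h2]
        _ = y * z * x := by rw [mul_assoc])
    (fun x y _ _ h => by
      have := congrArg (fun t => x⁻¹ * t * x⁻¹) h
      simpa [mul_assoc] using this.symm)
    (fun x y _ _ h => by
      have := congrArg (fun t => y⁻¹ * t * y⁻¹) h
      simpa [mul_assoc] using this.symm)
    hx hy

end Aux

/-- A subrack A of a finite group G is a maximal abelian subgroup of G iff the
interval [∅, A] is a maximal Boolean algebra in the subrack lattice. -/
theorem stmt7 {G : Type*} [Group G] [Finite G] (A : Set G) (hA : IsSubrack A) :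
    (∃ H : Subgroup G, (H : Set G) = A ∧
        (∀ x ∈ H, ∀ y ∈ H, x * y = y * x) ∧
        ∀ K : Subgroup G, (∀ x ∈ K, ∀ y ∈ K, x * y = y * x) → H ≤ K → H = K) ↔
    (IsBooleanInterval A ∧
      ∀ B : Set G, IsSubrack B → A ⊆ B → IsBooleanInterval B → A = B) := by
  constructor
  · rintro ⟨H, rfl, hcomm, hmax⟩
    refine ⟨isBooleanInterval_of_comm hcomm, ?_⟩
    intro B hBrack hAB hBbool
    have hBcomm := comm_of_isBooleanInterval hBbool
    set K := Subgroup.closure B with hK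
    have hKcomm : ∀ x ∈ K, ∀ y ∈ K, x * y = y * x := closure_comm hBcomm
    have hHK : H ≤ K := fun x hx => Subgroup.subset_closure (hAB hx)
    have hHKeq := hmax K hKcomm hHK
    apply Set.Subset.antisymm hAB
    intro b hb
    have : b ∈ K := Subgroup.subset_closure hb
    rw [← hHKeq] at this
    exact this
  · rintro ⟨hbool, hmax⟩
    have hcomm := comm_of_isBooleanInterval hbool
    set H := Subgroup.closure A with hH
    have hHcomm : ∀ x ∈ H, ∀ y ∈ H, x * y = y * x := closure_comm hcomm
    have hHA : A = (H : Set G) := by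
      refine hmax _ (subgroup_carrier_isSubrack H) Subgroup.subset_closure
        (isBooleanInterval_of_comm hHcomm)
    refine ⟨H, hHA.symm, hHcomm, ?_⟩
    intro K hKcomm hHK
    have hKA : A = (K : Set G) := by
      refine hmax _ (subgroup_carrier_isSubrack K)
        (hHA.trans_subset (SetLike.coe_subset_coe.mpr hHK)) ?_
      exact isBooleanInterval_of_comm hKcomm
    exact SetLike.coe_injective (hHA.symm.trans hKA ▸ rfl)
end

section
/- Let G be a finite group, N ⊴ G a normal subgroup, and a₁N, …, aₖN cosets of N. Then the join of the subracks a₁N, …, aₖN in the subrack lattice R(G) equals the union of those cosets of N that intersect the subrack generated by {a₁, …, aₖ} in (G, ▷); equivalently, it is the union of the cosets of N containing ⟨a₁,…,aₖ⟩_rk. -/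
open scoped Pointwise

/-- The subrack generated by a subset: the intersection of all subracks containing it. -/
def rackClosure {G : Type*} [Group G] (S : Set G) : Set G :=
  ⋂₀ {T : Set G | IsSubrack T ∧ S ⊆ T}

lemma subset_rackClosure {G : Type*} [Group G] (S : Set G) : S ⊆ rackClosure S :=
  fun _ hx => fun _ hT => hT.2 hx

lemma isSubrack_rackClosure {G : Type*} [Group G] (S : Set G) :
    IsSubrack (rackClosure S) := by
  intro x hx y hy T hT
  exact hT.1 x (hx T hT) y (hy T hT)

lemma rackClosure_min {G : Type*} [Group G] {S T : Set G} (hT : IsSubrack T)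
    (hST : S ⊆ T) : rackClosure S ⊆ T :=
  fun _ hx => hx T ⟨hT, hST⟩

/-- The join in the subrack lattice of the cosets a₁N, …, aₖN equals the union of
those cosets of N meeting (equivalently, covering) the subrack generated by
{a₁, …, aₖ}. -/
theorem stmt10 {G : Type*} [Group G] [Finite G] (N : Subgroup G) [N.Normal]
    (k : ℕ) (a : Fin k → G) :
    rackClosure (⋃ i : Fin k, (a i) • (N : Set G)) =
      {g : G | ∃ y ∈ rackClosure (Set.range a), y⁻¹ * g ∈ N} := by
  set U : Set G := ⋃ i : Fin k, (a i) • (N : Set G) with hU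
  set C := rackClosure U with hC
  set R := rackClosure (Set.range a) with hR
  have hCsub : IsSubrack C := isSubrack_rackClosure U
  -- C is a union of full cosets of N
  have hfull : ∀ g ∈ C, ∀ n ∈ N, g * n ∈ C := by
    set S' : Set G := {g | ∀ n ∈ N, g * n ∈ C} with hS'
    have hsub : IsSubrack S' := by
      intro x hx y hy n hn
      have hx1 : x ∈ C := by simpa using hx 1 (one_mem N)
      have h2 : y * (x⁻¹ * n * x) ∈ C := hy _ (Subgroup.Normal.conj_mem' ‹N.Normal› n hn x)
      have := hCsub x hx1 _ h2
      have heq : x * (y * (x⁻¹ * n * x)) * x⁻¹ = x * y * x⁻¹ * n := by group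
      rwa [heq] at this
    have hUS : U ⊆ S' := by
      intro g hg n hn
      rcases Set.mem_iUnion.mp hg with ⟨i, hi⟩
      rcases hi with ⟨m, hm, rfl⟩
      have : a i • m * n = a i • (m * n) := by simp [smul_eq_mul, mul_assoc]
      rw [this]
      exact subset_rackClosure U (Set.mem_iUnion.mpr ⟨i, ⟨m * n, mul_mem hm hn, rfl⟩⟩)
    exact fun g hg => rackClosure_min hsub hUS hg
  ext g
  constructor
  · -- C ⊆ RHS : RHS is a subrack containing U
    intro hg
    refine rackClosure_min (T := {g : G | ∃ y ∈ R, y⁻¹ * g ∈ N}) ?_ ?_ hg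
    · rintro x ⟨y₁, hy₁, hn₁⟩ z ⟨y₂, hy₂, hn₂⟩
      refine ⟨y₁ * y₂ * y₁⁻¹, isSubrack_rackClosure _ y₁ hy₁ y₂ hy₂, ?_⟩
      rw [← QuotientGroup.eq] at hn₁ hn₂ ⊢
      simp only [QuotientGroup.mk_mul, QuotientGroup.mk_inv, hn₁, hn₂]
    · intro g hg
      rcases Set.mem_iUnion.mp hg with ⟨i, hi⟩
      rcases hi with ⟨m, hm, rfl⟩
      exact ⟨a i, subset_rackClosure _ ⟨i, rfl⟩, by simpa [smul_eq_mul, mul_assoc] using hm⟩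
  · rintro ⟨y, hy, hn⟩
    have hRC : R ⊆ C := by
      apply rackClosure_min hCsub
      rintro x ⟨i, rfl⟩
      exact subset_rackClosure U (Set.mem_iUnion.mpr ⟨i, ⟨1, one_mem N, by simp⟩⟩)
    have := hfull y (hRC hy) _ hn
    simpa using this
end

section
/- Let G be a finite solvable group. Then G has a chief-like series 1 = N₀ ≤ N₁ ≤ ⋯ ≤ Nₖ = G in which each quotient Nᵢ₊₁/Nᵢ is a maximal normal abelian subgroup of G/Nᵢ, and the minimal length k of such a series equals the derived length of G. -/
/-- A maximal normal abelian subgroup: normal, abelian, and maximal among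
normal abelian subgroups. -/
def IsMaxNormalAbelian {K : Type*} [Group K] (A : Subgroup K) : Prop :=
  A.Normal ∧ (∀ x ∈ A, ∀ y ∈ A, x * y = y * x) ∧
    ∀ B : Subgroup K, B.Normal → (∀ x ∈ B, ∀ y ∈ B, x * y = y * x) → A ≤ B → A = B

/-- A series 1 = N₀ ≤ ⋯ ≤ Nₖ = G of normal subgroups in which each quotient
Nᵢ₊₁/Nᵢ is a maximal normal abelian subgroup of G/Nᵢ. -/
def IsChiefLikeSeries {G : Type*} [Group G] (k : ℕ) (N : Fin (k + 1) → Subgroup G) :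
    Prop :=
  N 0 = ⊥ ∧ N (Fin.last k) = ⊤ ∧ (∀ i j : Fin (k + 1), i ≤ j → N i ≤ N j) ∧
    ∃ hn : ∀ i, (N i).Normal,
      ∀ i : Fin k,
        letI := hn i.castSucc
        IsMaxNormalAbelian
          (Subgroup.map (QuotientGroup.mk' (N i.castSucc)) (N i.succ))

/-- The derived length: the least n with the n-th derived subgroup trivial. -/
noncomputable def derivedLength (G : Type*) [Group G] : ℕ :=
  sInf {n : ℕ | derivedSeries G n = ⊥}

open scoped commutatorElement

-- transfer along a MulEquiv
lemma isMaxNormalAbelian_map {K L : Type*} [Group K] [Group L] (e : K ≃* L)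
    {A : Subgroup K} (hA : IsMaxNormalAbelian A) :
    IsMaxNormalAbelian (A.map e.toMonoidHom) := by
  obtain ⟨hn, hab, hmax⟩ := hA
  refine ⟨hn.map _ e.surjective, ?_, ?_⟩
  · rintro x ⟨a, ha, rfl⟩ y ⟨b, hb, rfl⟩
    simp only [← map_mul]
    rw [hab a ha b hb]
  · intro B hBn hBab hle
    have hA' : A = B.comap e.toMonoidHom := by
      refine hmax _ (hBn.comap _) ?_ ?_
      · intro x hx y hy
        have := hBab _ hx _ hy
        exact e.injective (by simpa using this)
      · intro a ha
        exact hle ⟨a, ha, rfl⟩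
    rw [hA', Subgroup.map_comap_eq_self_of_surjective e.surjective]

-- maximal normal abelian containing a given normal abelian subgroup
lemma exists_maxNormalAbelian {K : Type*} [Group K] [Finite K] (A₀ : Subgroup K)
    (h₀ : A₀.Normal) (hab₀ : ∀ x ∈ A₀, ∀ y ∈ A₀, x * y = y * x) :
    ∃ A : Subgroup K, A₀ ≤ A ∧ IsMaxNormalAbelian A := by
  obtain ⟨A, hA, hmax⟩ := Set.Finite.exists_maximalFor id
    {B : Subgroup K | A₀ ≤ B ∧ B.Normal ∧ ∀ x ∈ B, ∀ y ∈ B, x * y = y * x}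
    (Set.toFinite _) ⟨A₀, le_rfl, h₀, hab₀⟩
  exact ⟨A, hA.1, hA.2.1, hA.2.2, fun B hBn hBab hle =>
    le_antisymm hle (hmax ⟨hA.1.trans hle, hBn, hBab⟩ hle)⟩

open Subgroup QuotientGroup in
lemma map_comap_third_iso {H : Type*} [Group H] (A C : Subgroup H) [A.Normal] [C.Normal]
    (hAC : A ≤ C) (S : Subgroup (H ⧸ A)) :
    Subgroup.map (mk' C) (Subgroup.comap (mk' A) S) =
      Subgroup.map (quotientQuotientEquivQuotient A C hAC).toMonoidHom
        (Subgroup.map (mk' (C.map (mk' A))) S) := by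
  have hS : S = Subgroup.map (mk' A) (Subgroup.comap (mk' A) S) :=
    (Subgroup.map_comap_eq_self_of_surjective (mk'_surjective A) S).symm
  conv_rhs => rw [hS]
  rw [Subgroup.map_map, Subgroup.map_map]
  congr 1

lemma maxna_congr {H : Type*} [Group H] (X Y S T : Subgroup H) (h1 : X = Y) (h2 : S = T)
    (hX : X.Normal) (hY : Y.Normal) :
    IsMaxNormalAbelian (Subgroup.map (@QuotientGroup.mk' H _ X hX) S) →
      IsMaxNormalAbelian (Subgroup.map (@QuotientGroup.mk' H _ Y hY) T) := by
  subst h1; subst h2; exact id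

open Subgroup QuotientGroup in
lemma chiefLike_derivedSeries_bot {G : Type*} [Group G] {k : ℕ}
    {N : Fin (k + 1) → Subgroup G} (h : IsChiefLikeSeries k N) :
    derivedSeries G k = ⊥ := by
  obtain ⟨h0, hlast, hmono, hn, hq⟩ := h
  have key : ∀ i : ℕ, ∀ hi : i ≤ k, derivedSeries G i ≤ N ⟨k - i, by omega⟩ := by
    intro i
    induction i with
    | zero =>
      intro _
      have : (⟨k - 0, by omega⟩ : Fin (k + 1)) = Fin.last k := by
        ext; simp
      rw [this, hlast]
      exact le_top
    | succ i IH =>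
      intro hi
      have hik : i ≤ k := by omega
      set j : Fin k := ⟨k - i - 1, by omega⟩ with hj
      have hsucc : j.succ = (⟨k - i, by omega⟩ : Fin (k + 1)) := by
        ext; simp [hj]; omega
      have hcast : j.castSucc = (⟨k - (i + 1), by omega⟩ : Fin (k + 1)) := by
        ext; simp [hj]; omega
      have hD : derivedSeries G i ≤ N j.succ := by rw [hsucc]; exact IH hik
      have habel := (hq j).2.1
      rw [derivedSeries_succ, ← hcast]
      rw [Subgroup.commutator_le]
      intro x hx y hy
      have hx' : x ∈ N j.succ := hD hx
      have hy' : y ∈ N j.succ := hD hy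
      letI := hn j.castSucc
      have hc := habel _ ⟨x, hx', rfl⟩ _ ⟨y, hy', rfl⟩
      have : ⁅x, y⁆ ∈ (QuotientGroup.mk' (N j.castSucc)).ker := by
        rw [MonoidHom.mem_ker, commutatorElement_def]
        simp only [map_mul, map_inv]
        rw [hc]
        group
      rwa [QuotientGroup.ker_mk'] at this
  have := key k le_rfl
  have h00 : (⟨k - k, by omega⟩ : Fin (k + 1)) = 0 := by ext; simp
  rw [h00, h0] at this
  exact le_bot_iff.mp this

universe u

open Subgroup QuotientGroup in
lemma exists_chief_series : ∀ (d : ℕ) (H : Type u) [Group H] [Finite H],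
    derivedSeries H d = ⊥ →
      ∃ k, k ≤ d ∧ ∃ N : Fin (k + 1) → Subgroup H, IsChiefLikeSeries k N := by
  intro d
  induction d with
  | zero =>
    intro H _ _ h
    refine ⟨0, le_rfl, fun _ => ⊥, rfl, ?_, fun i j _ => le_rfl, fun i => inferInstance,
      fun i => i.elim0⟩
    calc (⊥ : Subgroup H) = derivedSeries H 0 := h.symm
      _ = ⊤ := rfl
  | succ d IH =>
    intro H _ _ h
    -- the d-th derived subgroup is normal abelian
    have hab₀ : ∀ x ∈ derivedSeries H d, ∀ y ∈ derivedSeries H d, x * y = y * x := by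
      intro x hx y hy
      have : ⁅x, y⁆ ∈ derivedSeries H (d + 1) :=
        Subgroup.commutator_mem_commutator hx hy
      rw [h, Subgroup.mem_bot] at this
      exact commutatorElement_eq_one_iff_mul_comm.mp this
    obtain ⟨A, hA₀, hAmax⟩ := exists_maxNormalAbelian (derivedSeries H d)
      (derivedSeries_normal H d) hab₀
    letI hAn : A.Normal := hAmax.1
    -- the quotient has derived length ≤ d
    have hq : derivedSeries (H ⧸ A) d = ⊥ := by
      rw [← map_derivedSeries_eq (mk'_surjective A) d, Subgroup.map_eq_bot_iff,
        QuotientGroup.ker_mk']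
      exact hA₀
    obtain ⟨k, hk, M, hM0, hMlast, hMmono, hMn, hMq⟩ := IH (H ⧸ A) hq
    refine ⟨k + 1, by omega, Fin.cases ⊥ (fun i => (M i).comap (mk' A)),
      by simp only [Fin.cases_zero], ?_, ?_, ?_⟩
    · show Fin.cases (motive := fun _ => Subgroup H) ⊥ (fun i => (M i).comap (mk' A))
        (Fin.last (k + 1)) = ⊤
      rw [show Fin.last (k + 1) = Fin.succ (Fin.last k) from rfl, Fin.cases_succ, hMlast,
        Subgroup.comap_top]
    · intro i j
      induction i using Fin.cases with
      | zero => intro _; simp only [Fin.cases_zero]; exact bot_le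
      | succ i =>
        induction j using Fin.cases with
        | zero =>
          intro hij
          exact absurd (le_antisymm hij (Fin.zero_le _)) (Fin.succ_ne_zero i)
        | succ j =>
          intro hij
          simp only [Fin.cases_succ]
          exact Subgroup.comap_mono (hMmono i j (Fin.succ_le_succ_iff.mp hij))
    · have hn : ∀ i, (Fin.cases (motive := fun _ => Subgroup H) ⊥
          (fun i => (M i).comap (mk' A)) i).Normal := by
        intro i
        induction i using Fin.cases with
        | zero => simp only [Fin.cases_zero]; infer_instance
        | succ i => simp only [Fin.cases_succ]; exact (hMn i).comap _
      refine ⟨hn, ?_⟩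
      intro i
      induction i using Fin.cases with
      | zero =>
        -- first step: quotient by ⊥, subgroup A
        have hinj : Function.Injective (mk' (⊥ : Subgroup H)) := by
          rw [← MonoidHom.ker_eq_bot_iff, QuotientGroup.ker_mk']
        have := isMaxNormalAbelian_map
          (MulEquiv.ofBijective (mk' (⊥ : Subgroup H)) ⟨hinj, mk'_surjective ⊥⟩) hAmax
        refine maxna_congr ⊥ _ A _ ?_ ?_ inferInstance _ this
        · simp
        · simp only [Fin.cases_succ]
          rw [hM0, MonoidHom.comap_bot, QuotientGroup.ker_mk']
      | succ j =>
        set B : Subgroup (H ⧸ A) := M j.castSucc with hB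
        letI : B.Normal := hMn j.castSucc
        set C : Subgroup H := B.comap (mk' A) with hC
        letI hCn : C.Normal := (hMn j.castSucc).comap _
        have hAC : A ≤ C := fun x hx => by
          show (mk' A) x ∈ B
          rw [show (mk' A) x = 1 from (QuotientGroup.eq_one_iff x).mpr hx]
          exact B.one_mem
        have hmapC : C.map (mk' A) = B :=
          Subgroup.map_comap_eq_self_of_surjective (mk'_surjective A) B
        have step1 : IsMaxNormalAbelian
            (Subgroup.map (mk' (C.map (mk' A))) (M j.succ)) :=
          maxna_congr B (C.map (mk' A)) (M j.succ) (M j.succ) hmapC.symm rfl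
            (hMn j.castSucc) inferInstance (hMq j)
        have step2 := isMaxNormalAbelian_map
          (quotientQuotientEquivQuotient A C hAC) step1
        rw [← map_comap_third_iso A C hAC (M j.succ)] at step2
        refine maxna_congr C _ ((M j.succ).comap (mk' A)) _ ?_ ?_ hCn _ step2
        · rw [← Fin.succ_castSucc]
          simp only [Fin.cases_succ]
          rfl
        · simp only [Fin.cases_succ]

/-- A finite solvable group has a chief-like series, and the minimal length of
such a series equals the derived length. -/
theorem stmt14 {G : Type*} [Group G] [Finite G] (hG : IsSolvable G) :
    (∃ (k : ℕ) (N : Fin (k + 1) → Subgroup G), IsChiefLikeSeries k N) ∧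
    sInf {k : ℕ | ∃ N : Fin (k + 1) → Subgroup G, IsChiefLikeSeries k N} =
      derivedLength G := by
  obtain ⟨n, hn⟩ := (isSolvable_def G).mp hG
  have hne : {m : ℕ | derivedSeries G m = ⊥}.Nonempty := ⟨n, hn⟩
  have hd : derivedSeries G (derivedLength G) = ⊥ := Nat.sInf_mem hne
  obtain ⟨k, hk, N, hN⟩ := exists_chief_series (derivedLength G) G hd
  have hlow : ∀ k' ∈ {k : ℕ | ∃ N : Fin (k + 1) → Subgroup G, IsChiefLikeSeries k N},
      derivedLength G ≤ k' := by
    rintro k' ⟨N', hN'⟩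
    exact Nat.sInf_le (chiefLike_derivedSeries_bot hN')
  have hkd : k = derivedLength G := le_antisymm hk (hlow k ⟨N, hN⟩)
  refine ⟨⟨k, N, hN⟩, le_antisymm ?_ (le_csInf ⟨k, N, hN⟩ hlow)⟩
  subst hkd
  exact Nat.sInf_le ⟨N, hN⟩
end

section
/- Let G be a finite group viewed as the conjugation rack (G, ▷). The set of central elements of G is exactly the set of elements x such that {x} ∪ S is a subrack for every subrack S of G; equivalently, x ∈ Z(G) if and only if the atom {x} of R(G) joins trivially (by union) with every element of R(G). -/
/-- An element x of a finite group G is central iff {x} ∪ S is a subrack for every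
subrack S, i.e. the atom {x} joins with every subrack by plain union. -/
theorem stmt18 {G : Type*} [Group G] [Finite G] (x : G) :
    x ∈ Subgroup.center G ↔
      ∀ S : Set G, IsSubrack S → IsSubrack ({x} ∪ S) := by
  rw [Subgroup.mem_center_iff]
  constructor
  · intro hx S hS a ha b hb
    rcases ha with ha | ha
    · rcases hb with hb | hb
      · left; simp_all
      · right
        simp only [Set.mem_singleton_iff] at ha
        have : a * b * a⁻¹ = b := by rw [ha, ← hx b]; group
        rw [this]; exact hb
    · rcases hb with hb | hb
      · left
        simp only [Set.mem_singleton_iff] at hb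
        have : a * b * a⁻¹ = x := by rw [hb, hx a]; group
        simpa using this
      · right; exact hS a ha b hb
  · intro h g
    have hS : IsSubrack ({g} : Set G) := by
      intro a ha b hb
      simp_all
    have h2 := h {g} hS
    have h3 := h2 g (Or.inr rfl) x (Or.inl rfl)
    rcases h3 with h3 | h3
    · simp only [Set.mem_singleton_iff] at h3
      have : g * x = x * g := by
        have := mul_inv_eq_iff_eq_mul.mp h3
        rw [this]
      exact this
    · simp only [Set.mem_singleton_iff] at h3
      have h4 : g * x = g * g := mul_inv_eq_iff_eq_mul.mp h3
      have hx : x = g := mul_left_cancel h4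
      subst hx; rfl
end

section
/- Let G be a finite group. A singleton {x} is such that the union {x} ∪ C is a subrack of (G, ▷) for every conjugacy class C of G if and only if x ∈ Z(G). Consequently, the number of central elements of G is determined by the isomorphism type of the subrack lattice R(G). -/
/-- The subrack lattice of a group, as a poset of conjugation-closed subsets. -/
def SubrackLattice (G : Type*) [Group G] : Type _ := {S : Set G // IsSubrack S}

instance {G : Type*} [Group G] : PartialOrder (SubrackLattice G) :=
  Subtype.partialOrder _

namespace Stmt19Aux

variable {G : Type*} [Group G]

lemma le_iff {a b : SubrackLattice G} : a ≤ b ↔ a.1 ⊆ b.1 := Iff.rfl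

/-- `a` is the minimum of the subrack lattice. -/
def IsM (a : SubrackLattice G) : Prop := ∀ b, a ≤ b

/-- `a` is an atom of the subrack lattice (order-theoretic). -/
def IsAtm (a : SubrackLattice G) : Prop := ¬ IsM a ∧ ∀ b, b < a → IsM b

/-- `c` is the join of `a` and `s` (order-theoretic). -/
def IsJn (a s c : SubrackLattice G) : Prop :=
  a ≤ c ∧ s ≤ c ∧ ∀ d, a ≤ d → s ≤ d → c ≤ d

/-- Order-theoretic characterization of central atoms. -/
def Cent (a : SubrackLattice G) : Prop :=
  IsAtm a ∧ ∀ s c, IsJn a s c → ∀ b, IsAtm b → b ≤ c → (b ≤ s ∨ b = a)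

/-- The empty subrack. -/
def sbot : SubrackLattice G := ⟨∅, fun a ha => absurd ha (Set.notMem_empty a)⟩

/-- The singleton subrack. -/
def sing (x : G) : SubrackLattice G :=
  ⟨{x}, by intro a ha b hb; simp only [Set.mem_singleton_iff] at *; subst ha; subst hb; simp⟩

lemma isM_iff {a : SubrackLattice G} : IsM a ↔ a.1 = ∅ := by
  constructor
  · intro h
    exact Set.eq_empty_iff_forall_notMem.2 fun x hx => (h sbot hx)
  · intro h b
    rw [le_iff, h]
    exact Set.empty_subset _

lemma isAtm_iff {a : SubrackLattice G} : IsAtm a ↔ ∃ x, a.1 = {x} := by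
  constructor
  · rintro ⟨h1, h2⟩
    rw [isM_iff] at h1
    obtain ⟨x, hx⟩ := Set.nonempty_iff_ne_empty.2 h1
    refine ⟨x, ?_⟩
    by_contra hne
    have hlt : sing x < a := by
      refine lt_of_le_of_ne ?_ ?_
      · rw [le_iff]; exact Set.singleton_subset_iff.2 hx
      · intro h; apply hne; rw [← h]; rfl
    have := isM_iff.1 (h2 _ hlt)
    exact absurd this (Set.singleton_ne_empty x)
  · rintro ⟨x, hx⟩
    constructor
    · rw [isM_iff, hx]; exact Set.singleton_ne_empty x
    · intro b hb
      rw [isM_iff]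
      have hsub : b.1 ⊆ {x} := hx ▸ le_of_lt hb
      rcases Set.subset_singleton_iff_eq.1 hsub with h | h
      · exact h
      · exfalso
        apply absurd (Subtype.ext (h.trans hx.symm) : b = a) (ne_of_lt hb)

/-- The join of two singletons, concretely. -/
def jn (x y : G) : SubrackLattice G :=
  ⟨⋂₀ {S : Set G | IsSubrack S ∧ x ∈ S ∧ y ∈ S}, by
    intro a ha b hb
    rw [Set.mem_sInter] at *
    intro S hS
    exact hS.1 a (ha S hS) b (hb S hS)⟩

lemma mem_sing {z x : G} : z ∈ (sing x).1 ↔ z = x := Set.mem_singleton_iff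

lemma sing_le_iff {x : G} {b : SubrackLattice G} : sing x ≤ b ↔ x ∈ b.1 :=
  Set.singleton_subset_iff

lemma sing_inj {x y : G} (h : sing x = sing y) : x = y := by
  have := congrArg Subtype.val h
  simpa [sing, Set.singleton_eq_singleton_iff] using this

lemma isJn_jn (x y : G) : IsJn (sing x) (sing y) (jn x y) := by
  refine ⟨?_, ?_, ?_⟩
  · rw [sing_le_iff]
    exact Set.mem_sInter.2 fun S hS => hS.2.1
  · rw [sing_le_iff]
    exact Set.mem_sInter.2 fun S hS => hS.2.2
  · intro d hx hy
    rw [le_iff]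
    intro z hz
    exact hz d.1 ⟨d.2, sing_le_iff.1 hx, sing_le_iff.1 hy⟩

lemma mem_jn_left (x y : G) : x ∈ (jn x y).1 := (isJn_jn x y).1 rfl
lemma mem_jn_right (x y : G) : y ∈ (jn x y).1 := (isJn_jn x y).2.1 rfl

lemma cent_iff (x : G) : Cent (sing x) ↔ x ∈ Subgroup.center G := by
  constructor
  · rintro ⟨-, h⟩
    rw [Subgroup.mem_center_iff]
    intro y
    have hsub : (jn x y).1 ⊆ {x, y} := by
      intro z hz
      have hb : sing z ≤ jn x y := sing_le_iff.2 hz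
      rcases h (sing y) (jn x y) (isJn_jn x y) (sing z) (isAtm_iff.2 ⟨z, rfl⟩) hb with h' | h'
      · exact Or.inr (mem_sing.1 (sing_le_iff.1 h'))
      · exact Or.inl (sing_inj h')
    have hcl := (jn x y).2 x (mem_jn_left x y) y (mem_jn_right x y)
    rcases hsub hcl with h' | h'
    · have hyx : y = x := by
        have h2 : x * y = x * x := by
          have := congrArg (· * x) h'
          simpa [mul_assoc] using this
        exact mul_left_cancel h2
      rw [hyx]
    · rw [Set.mem_singleton_iff] at h'
      have : x * y = y * x := by
        have := congrArg (· * x) h'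
        simpa [mul_assoc] using this
      exact this.symm
  · intro hx
    refine ⟨isAtm_iff.2 ⟨x, rfl⟩, ?_⟩
    intro s c hjn b hb hbc
    have hxc : ∀ g : G, x * g = g * x := fun g => (Subgroup.mem_center_iff.1 hx g).symm
    have hU : IsSubrack ({x} ∪ s.1) := by
      rintro u hu v hv
      rcases hu with hu | hu
      · rw [Set.mem_singleton_iff] at hu
        have h1 : u * v * u⁻¹ = v := by rw [hu, hxc v]; group
        rw [h1]; exact hv
      · rcases hv with hv | hv
        · rw [Set.mem_singleton_iff] at hv
          have h1 : u * v * u⁻¹ = v := by rw [hv, ← hxc u]; group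
          rw [h1]; exact Or.inl hv
        · exact Or.inr (s.2 u hu v hv)
    have hcU : c ≤ ⟨_, hU⟩ := by
      apply hjn.2.2
      · exact le_iff.2 Set.subset_union_left
      · exact le_iff.2 Set.subset_union_right
    obtain ⟨z, hz⟩ := isAtm_iff.1 hb
    have hbz : b = sing z := Subtype.ext hz
    have hzc : z ∈ c.1 := hbc (show z ∈ b.1 from hz ▸ rfl)
    rcases hcU hzc with h' | h'
    · rw [Set.mem_singleton_iff] at h'
      exact Or.inr (by rw [hbz, h'])
    · exact Or.inl (by rw [hbz]; exact sing_le_iff.2 h')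

end Stmt19Aux

namespace Stmt19Aux

section Transfer

variable {G : Type*} [Group G] {H : Type*} [Group H]

lemma isM_map (e : SubrackLattice G ≃o SubrackLattice H) {a : SubrackLattice G} :
    IsM a → IsM (e a) := fun h b => by
  obtain ⟨b', rfl⟩ := e.surjective b
  exact e.le_iff_le.2 (h b')

lemma isAtm_map (e : SubrackLattice G ≃o SubrackLattice H) {a : SubrackLattice G} :
    IsAtm a → IsAtm (e a) := by
  rintro ⟨h1, h2⟩
  constructor
  · intro hm
    apply h1
    have := isM_map e.symm hm
    simpa using this
  · intro b hb
    obtain ⟨b', rfl⟩ := e.surjective b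
    exact isM_map e (h2 b' (e.lt_iff_lt.1 hb))

lemma cent_map (e : SubrackLattice G ≃o SubrackLattice H) {a : SubrackLattice G} :
    Cent a → Cent (e a) := by
  rintro ⟨h1, h2⟩
  refine ⟨isAtm_map e h1, ?_⟩
  intro s c hjn b hb hbc
  obtain ⟨s', rfl⟩ := e.surjective s
  obtain ⟨c', rfl⟩ := e.surjective c
  obtain ⟨b', rfl⟩ := e.surjective b
  have hjn' : IsJn a s' c' := by
    refine ⟨e.le_iff_le.1 hjn.1, e.le_iff_le.1 hjn.2.1, ?_⟩
    intro d hd1 hd2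
    exact e.le_iff_le.1 (hjn.2.2 (e d) (e.le_iff_le.2 hd1) (e.le_iff_le.2 hd2))
  have hb' : IsAtm b' := by
    have := isAtm_map e.symm (by simpa using hb : IsAtm (e b'))
    simpa using this
  rcases h2 s' c' hjn' b' hb' (e.le_iff_le.1 hbc) with h | h
  · exact Or.inl (e.le_iff_le.2 h)
  · exact Or.inr (by rw [h])

lemma cent_iff_map (e : SubrackLattice G ≃o SubrackLattice H) (a : SubrackLattice G) :
    Cent a ↔ Cent (e a) := by
  refine ⟨cent_map e, fun h => ?_⟩
  have := cent_map e.symm h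
  simpa using this

end Transfer

lemma card_center_eq (G : Type*) [Group G] :
    Nat.card (Subgroup.center G) = Nat.card {a : SubrackLattice G // Cent a} := by
  refine Nat.card_congr (Equiv.ofBijective
    (fun x => ⟨sing x.1, (cent_iff x.1).2 x.2⟩) ⟨?_, ?_⟩)
  · intro x y hxy
    exact Subtype.ext (sing_inj (congrArg Subtype.val hxy))
  · rintro ⟨a, ha⟩
    obtain ⟨z, hz⟩ := isAtm_iff.1 ha.1
    have haz : a = sing z := Subtype.ext hz
    have hzc : z ∈ Subgroup.center G := (cent_iff z).1 (haz ▸ ha)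
    exact ⟨⟨z, hzc⟩, Subtype.ext haz.symm⟩

end Stmt19Aux

namespace Stmt19Aux

lemma central_of_subrack_unions {G : Type*} [Group G] [Finite G] (x : G)
    (h : ∀ g : G, IsSubrack ({x} ∪ {y : G | IsConj g y})) : x ∈ Subgroup.center G := by
  by_contra hx
  rw [Subgroup.mem_center_iff] at hx
  push_neg at hx
  obtain ⟨y, hy⟩ := hx
  -- every element not commuting with x is conjugate to x
  have step1 : ∀ g : G, g * x ≠ x * g → IsConj x g := by
    intro g hg
    have hmem := h g g (Or.inr (IsConj.refl g)) x (Or.inl rfl)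
    rcases hmem with h1 | h1
    · exfalso
      apply hg
      rw [Set.mem_singleton_iff] at h1
      have := congrArg (· * g) h1
      simpa [mul_assoc] using this
    · have h2 : IsConj x (g * x * g⁻¹) := isConj_iff.2 ⟨g, rfl⟩
      exact h2.trans h1.symm
  have hx1 : x ≠ 1 := by
    intro h1
    exact hy (by rw [h1, one_mul, mul_one])
  set C := Subgroup.centralizer ({x} : Set G) with hC
  have hxC : x ∈ C := Subgroup.mem_centralizer_singleton_iff.2 rfl
  have hyC : y ∉ C := fun hyc => hy (Subgroup.mem_centralizer_singleton_iff.1 hyc)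
  have hCtop : C ≠ ⊤ := fun htop => hyC (htop ▸ Subgroup.mem_top y)
  have hCbot : C ≠ ⊥ := by
    intro hbot
    exact hx1 (Subgroup.mem_bot.1 (hbot ▸ hxC))
  have hc2 : 2 ≤ Nat.card C := (Subgroup.one_lt_card_iff_ne_bot C).2 hCbot
  -- orbit of x under conjugation
  have hOsub : insert x ((C : Set G)ᶜ) ⊆ MulAction.orbit (ConjAct G) x := by
    rintro g (rfl | hg)
    · exact MulAction.mem_orbit_self _
    · have hgC : g ∉ C := hg
      have hgx : g * x ≠ x * g := fun hc =>
        hgC (Subgroup.mem_centralizer_singleton_iff.2 hc)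
      exact ConjAct.mem_orbit_conjAct.2 (step1 g hgx).symm
  classical
  have : Fintype G := Fintype.ofFinite G
  -- orbit–stabilizer
  have horb : Nat.card (MulAction.orbit (ConjAct G) x) * Nat.card C = Nat.card G := by
    rw [Subgroup.nat_card_centralizer_nat_card_stabilizer x]
    simp only [Nat.card_eq_fintype_card]
    rw [MulAction.card_orbit_mul_card_stabilizer_eq_card_group (ConjAct G) x]
    exact Fintype.card_congr ConjAct.ofConjAct.toEquiv
  -- counting
  have hk1 : (Nat.card G - Nat.card C) + 1 ≤ Nat.card (MulAction.orbit (ConjAct G) x) := by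
    have h1 : (insert x ((C : Set G)ᶜ)).ncard ≤ (MulAction.orbit (ConjAct G) x).ncard :=
      Set.ncard_le_ncard hOsub (Set.toFinite _)
    have h2 : (insert x ((C : Set G)ᶜ)).ncard = ((C : Set G)ᶜ).ncard + 1 :=
      Set.ncard_insert_of_notMem (fun hc => hc hxC) (Set.toFinite _)
    have h3 : (C : Set G).ncard + ((C : Set G)ᶜ).ncard = Nat.card G :=
      Set.ncard_add_ncard_compl _ (Set.toFinite _) (Set.toFinite _)
    have h4 : (C : Set G).ncard = Nat.card C := by
      rw [← Nat.card_coe_set_eq]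
      rfl
    have h5 : Nat.card (MulAction.orbit (ConjAct G) x) = (MulAction.orbit (ConjAct G) x).ncard :=
      Nat.card_coe_set_eq _
    omega
  have hcle : Nat.card C ≤ Nat.card G := Subgroup.card_le_card_group C
  have hmul : ((Nat.card G - Nat.card C) + 1) * Nat.card C ≤ Nat.card G := by
    calc ((Nat.card G - Nat.card C) + 1) * Nat.card C
        ≤ Nat.card (MulAction.orbit (ConjAct G) x) * Nat.card C :=
          Nat.mul_le_mul_right _ hk1
      _ = Nat.card G := horb
  have htwo : (Nat.card G - Nat.card C) * 2 ≤ (Nat.card G - Nat.card C) * Nat.card C :=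
    Nat.mul_le_mul_left _ hc2
  have hexp : ((Nat.card G - Nat.card C) + 1) * Nat.card C
      = (Nat.card G - Nat.card C) * Nat.card C + Nat.card C := by ring
  have hcge : Nat.card G ≤ Nat.card C := by omega
  exact hCtop (Subgroup.eq_top_of_card_eq C (le_antisymm hcle hcge))

end Stmt19Aux

/-- x is central iff {x} ∪ C is a subrack for every conjugacy class C; consequently
the number of central elements is determined by the subrack lattice. -/
theorem stmt19 {G : Type*} [Group G] [Finite G] :
    (∀ x : G,
      (∀ g : G, IsSubrack ({x} ∪ {y : G | IsConj g y})) ↔ x ∈ Subgroup.center G) ∧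
    (∀ (H : Type*) (_ : Group H) (_ : Finite H),
      Nonempty (SubrackLattice G ≃o SubrackLattice H) →
      Nat.card (Subgroup.center G) = Nat.card (Subgroup.center H)) := by
  constructor
  · intro x
    constructor
    · exact Stmt19Aux.central_of_subrack_unions x
    · intro hx g
      have hxc : ∀ g' : G, x * g' = g' * x :=
        fun g' => (Subgroup.mem_center_iff.1 hx g').symm
      rintro u hu v hv
      rcases hu with hu | hu
      · rw [Set.mem_singleton_iff] at hu
        have h1 : u * v * u⁻¹ = v := by rw [hu, hxc v]; group
        rw [h1]; exact hv
      · rcases hv with hv | hv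
        · rw [Set.mem_singleton_iff] at hv
          have h1 : u * v * u⁻¹ = v := by rw [hv, ← hxc u]; group
          rw [h1]; exact Or.inl hv
        · exact Or.inr (hv.trans (isConj_iff.2 ⟨u, rfl⟩))
  · rintro H _ _ ⟨e⟩
    rw [Stmt19Aux.card_center_eq G, Stmt19Aux.card_center_eq H]
    exact Nat.card_congr (Equiv.subtypeEquiv e.toEquiv (Stmt19Aux.cent_iff_map e))
end
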